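/- For any A in the particle-number preserving CAR algebra 𝔄₀ and f₁,…,fₙ,g₁,…,gₙ ∈ 𝔥, one has lim_{|x|→∞} ⟨a*(g₁)⋯a*(g_{n-1})a*(T_x gₙ)Ω, A a*(f₁)⋯a*(f_{n-1})a*(T_x fₙ)Ω⟩ = ⟨a*(g₁)⋯a*(g_{n-1})Ω, A a*(f₁)⋯a*(f_{n-1})Ω⟩ · ⟨gₙ, fₙ⟩. -/

import Mathlib

/- STATEMENT 6: clustering for the particle-number preserving CAR algebra 𝔄₀: for A ∈ 𝔄₀,
⟨a*(g₁)⋯a*(T_x gₙ)Ω, A a*(f₁)⋯a*(T_x fₙ)Ω⟩ →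
⟨a*(g₁)⋯a*(g_{n-1})Ω, A a*(f₁)⋯a*(f_{n-1})Ω⟩·⟨gₙ,fₙ⟩ as |x| → ∞,
where T_x are the translation unitaries of 𝔥 = L²(ℝᵈ) (which tend weakly to zero). -/

noncomputable section

open ContinuousLinearMap Filter

variable {H F : Type*} [NormedAddCommGroup H] [InnerProductSpace ℂ H]
  [NormedAddCommGroup F] [InnerProductSpace ℂ F] [CompleteSpace F]

/-- The product `a*(h₁)⋯a*(hₙ)` of creation operators. -/
def creaProd (crea : H → F →L[ℂ] F) {n : ℕ} (h : Fin n → H) : F →L[ℂ] F :=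
  (List.ofFn fun i => crea (h i)).prod

/-- The product `a(h₁)⋯a(hₙ)` of annihilation operators. -/
def annProd (crea : H → F →L[ℂ] F) {n : ℕ} (h : Fin n → H) : F →L[ℂ] F :=
  (List.ofFn fun i => adjoint (crea (h i))).prod

/-- The particle number preserving CAR algebra `𝔄₀`: the norm closure of the linear span of
the balanced products `a*(f₁)⋯a*(fₖ)a(g₁)⋯a(gₖ)`. -/
def ppCAR (crea : H → F →L[ℂ] F) : Set (F →L[ℂ] F) :=
  closure (Submodule.span ℂ
    {X | ∃ (k : ℕ) (u v : Fin k → H), X = creaProd crea u * annProd crea v} : Set (F →L[ℂ] F))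

set_option linter.unusedSectionVars false
set_option linter.unusedVariables false

lemma aux_apply_le (crea : H → F →L[ℂ] F)
    (hcar₂ : ∀ f g : H,
      adjoint (crea f) * crea g + crea g * adjoint (crea f)
        = (inner ℂ f g : ℂ) • (1 : F →L[ℂ] F)) (h : H) (ψ : F) :
    ‖crea h ψ‖ ≤ ‖h‖ * ‖ψ‖ ∧ ‖adjoint (crea h) ψ‖ ≤ ‖h‖ * ‖ψ‖ := by
  have key0 : adjoint (crea h) (crea h ψ) + crea h (adjoint (crea h) ψ)
      = (inner ℂ h h : ℂ) • ψ := by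
    have := congrArg (fun B : F →L[ℂ] F => B ψ) (hcar₂ h h)
    simpa using this
  have key : (‖crea h ψ‖^2 : ℂ) + (‖adjoint (crea h) ψ‖^2 : ℂ)
      = (‖h‖^2 : ℂ) * (‖ψ‖^2 : ℂ) := by
    have := congrArg (fun y => (inner ℂ ψ y : ℂ)) key0
    simp only [inner_add_right, inner_smul_right] at this
    rw [adjoint_inner_right (crea h) ψ ((crea h) ψ),
      ← adjoint_inner_left (crea h) ((adjoint (crea h)) ψ) ψ,
      inner_self_eq_norm_sq_to_K, inner_self_eq_norm_sq_to_K,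
      inner_self_eq_norm_sq_to_K, inner_self_eq_norm_sq_to_K ψ] at this
    exact this
  have keyR : ‖crea h ψ‖^2 + ‖adjoint (crea h) ψ‖^2 = ‖h‖^2 * ‖ψ‖^2 := by
    exact_mod_cast key
  constructor
  · nlinarith [sq_nonneg (‖adjoint (crea h) ψ‖), norm_nonneg (crea h ψ),
      mul_nonneg (norm_nonneg h) (norm_nonneg ψ)]
  · nlinarith [sq_nonneg (‖crea h ψ‖), norm_nonneg (adjoint (crea h) ψ),
      mul_nonneg (norm_nonneg h) (norm_nonneg ψ)]

lemma aux_opnorm (crea : H → F →L[ℂ] F)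
    (hcar₂ : ∀ f g : H,
      adjoint (crea f) * crea g + crea g * adjoint (crea f)
        = (inner ℂ f g : ℂ) • (1 : F →L[ℂ] F)) (h : H) :
    ‖crea h‖ ≤ ‖h‖ ∧ ‖adjoint (crea h)‖ ≤ ‖h‖ :=
  ⟨opNorm_le_bound _ (norm_nonneg h) fun ψ => (aux_apply_le crea hcar₂ h ψ).1,
   opNorm_le_bound _ (norm_nonneg h) fun ψ => (aux_apply_le crea hcar₂ h ψ).2⟩

lemma aux_anticomm (crea : H → F →L[ℂ] F)
    (hcar₁ : ∀ f g : H, crea f * crea g + crea g * crea f = 0)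
    (ℓ : List H) (w : H) :
    (ℓ.map crea).prod * crea w
      = ((-1 : ℂ) ^ ℓ.length) • (crea w * (ℓ.map crea).prod) := by
  induction ℓ with
  | nil => simp
  | cons a ℓ ih =>
    have hsw : crea a * crea w = -(crea w * crea a) :=
      eq_neg_of_add_eq_zero_left (hcar₁ a w)
    simp only [List.map_cons, List.prod_cons, List.length_cons]
    rw [mul_assoc, ih, mul_smul_comm, ← mul_assoc, hsw, pow_succ]
    simp [neg_mul, mul_assoc, mul_neg_one, neg_smul]

lemma aux_ann_vanish (crea : H → F →L[ℂ] F)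
    (hcar₂ : ∀ f g : H,
      adjoint (crea f) * crea g + crea g * adjoint (crea f)
        = (inner ℂ f g : ℂ) • (1 : F →L[ℂ] F)) (Ω : F)
    (hvac : ∀ f : H, adjoint (crea f) Ω = 0)
    {α : Type*} {l : Filter α} (w : α → H)
    (hw : ∀ u : H, Tendsto (fun x => (inner ℂ u (w x) : ℂ)) l (nhds 0))
    (ℓ : List H) :
    Tendsto (fun x => adjoint (crea (w x)) ((ℓ.map crea).prod Ω)) l (nhds 0) := by
  induction ℓ with
  | nil => simpa using tendsto_const_nhds.congr (fun x => (hvac (w x)).symm)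
  | cons a ℓ ih =>
    have hid : ∀ x, adjoint (crea (w x)) ((((a :: ℓ).map crea)).prod Ω)
        = (inner ℂ (w x) a : ℂ) • ((ℓ.map crea).prod Ω)
          - crea a (adjoint (crea (w x)) ((ℓ.map crea).prod Ω)) := by
      intro x
      have := congrArg (fun B : F →L[ℂ] F => B ((ℓ.map crea).prod Ω)) (hcar₂ (w x) a)
      simp only [add_apply, mul_apply, smul_apply, one_apply] at this
      simp only [List.map_cons, List.prod_cons, mul_apply]
      exact eq_sub_of_add_eq this
    have t1 : Tendsto (fun x => (inner ℂ (w x) a : ℂ)) l (nhds 0) := by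
      have := (hw a).star
      rw [star_zero] at this
      exact this.congr fun x => by rw [← inner_conj_symm]; exact star_star _
    have t1' : Tendsto (fun x => (inner ℂ (w x) a : ℂ) • ((ℓ.map crea).prod Ω))
        l (nhds 0) := by
      simpa using t1.smul_const ((ℓ.map crea).prod Ω)
    have t2 : Tendsto (fun x => crea a (adjoint (crea (w x)) ((ℓ.map crea).prod Ω)))
        l (nhds 0) := by
      have := ((crea a).continuous.tendsto 0).comp ih
      simpa [Function.comp_def] using this
    have := t1'.sub t2
    rw [sub_zero] at this
    exact this.congr fun x => (hid x).symm

lemma aux_comm_ann (crea : H → F →L[ℂ] F)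
    (hcar₂ : ∀ f g : H,
      adjoint (crea f) * crea g + crea g * adjoint (crea f)
        = (inner ℂ f g : ℂ) • (1 : F →L[ℂ] F))
    {α : Type*} {l : Filter α} (w : α → H)
    (hw : ∀ u : H, Tendsto (fun x => (inner ℂ u (w x) : ℂ)) l (nhds 0))
    (ℓ : List H) (ψ : F) :
    Tendsto (fun x =>
        (ℓ.map fun v => adjoint (crea v)).prod (crea (w x) ψ)
          - ((-1 : ℂ) ^ ℓ.length) •
              crea (w x) ((ℓ.map fun v => adjoint (crea v)).prod ψ))
      l (nhds 0) := by
  induction ℓ with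
  | nil => simpa using (tendsto_const_nhds : Tendsto (fun _ : α => (0:F)) l (nhds 0))
  | cons a ℓ ih =>
    set P := (ℓ.map fun v => adjoint (crea v)).prod with hP
    have hid : ∀ x,
        ((a :: ℓ).map fun v => adjoint (crea v)).prod (crea (w x) ψ)
          - ((-1 : ℂ) ^ (a :: ℓ).length) •
              crea (w x) (((a :: ℓ).map fun v => adjoint (crea v)).prod ψ)
        = adjoint (crea a)
            (P (crea (w x) ψ) - ((-1 : ℂ) ^ ℓ.length) • crea (w x) (P ψ))
          + ((-1 : ℂ) ^ ℓ.length) • ((inner ℂ a (w x) : ℂ) • (P ψ)) := by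
      intro x
      have key : adjoint (crea a) (crea (w x) (P ψ))
          = (inner ℂ a (w x) : ℂ) • (P ψ) - crea (w x) (adjoint (crea a) (P ψ)) := by
        have := congrArg (fun B : F →L[ℂ] F => B (P ψ)) (hcar₂ a (w x))
        simp only [add_apply, mul_apply, smul_apply, one_apply] at this
        exact eq_sub_of_add_eq this
      simp only [List.map_cons, List.prod_cons, List.length_cons, ContinuousLinearMap.mul_apply,
        map_sub, map_smul, key, pow_succ]
      module
    have t1 : Tendsto (fun x => adjoint (crea a)
        (P (crea (w x) ψ) - ((-1 : ℂ) ^ ℓ.length) • crea (w x) (P ψ))) l (nhds 0) := by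
      have := ((adjoint (crea a)).continuous.tendsto 0).comp ih
      rw [map_zero] at this
      exact this
    have t2 : Tendsto (fun x =>
        ((-1 : ℂ) ^ ℓ.length) • ((inner ℂ a (w x) : ℂ) • (P ψ))) l (nhds 0) := by
      have := ((hw a).smul_const (P ψ)).const_smul ((-1 : ℂ) ^ ℓ.length)
      simpa using this
    have := t1.add t2
    rw [add_zero] at this
    exact this.congr fun x => (hid x).symm

lemma aux_mono (crea : H → F →L[ℂ] F) (Ω : F)
    (hcar₁ : ∀ f g : H, crea f * crea g + crea g * crea f = 0)
    (hcar₂ : ∀ f g : H,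
      adjoint (crea f) * crea g + crea g * adjoint (crea f)
        = (inner ℂ f g : ℂ) • (1 : F →L[ℂ] F))
    (hvac : ∀ f : H, adjoint (crea f) Ω = 0)
    {α : Type*} {l : Filter α} (wf wg : α → H)
    (hwf : ∀ u : H, Tendsto (fun x => (inner ℂ u (wf x) : ℂ)) l (nhds 0))
    (hwg : ∀ u : H, Tendsto (fun x => (inner ℂ u (wg x) : ℂ)) l (nhds 0))
    (c : ℂ) (hc : ∀ x, (inner ℂ (wg x) (wf x) : ℂ) = c)
    (Cg : ℝ) (hCg : ∀ x, ‖wg x‖ ≤ Cg)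
    (n : ℕ) (f g : Fin n → H) (k : ℕ) (u v : Fin k → H) :
    Tendsto (fun x => (inner ℂ (creaProd crea g (crea (wg x) Ω))
        ((creaProd crea u * annProd crea v) (creaProd crea f (crea (wf x) Ω))) : ℂ)) l
      (nhds ((inner ℂ (creaProd crea g Ω)
        ((creaProd crea u * annProd crea v) (creaProd crea f Ω)) : ℂ) * c)) := by
  have list_eq : ∀ (m : ℕ) (h : Fin m → H),
      creaProd crea h = ((List.ofFn h).map crea).prod := by
    intro m h; rw [List.map_ofFn]; rfl
  have alist_eq : ∀ (m : ℕ) (h : Fin m → H),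
      annProd crea h = ((List.ofFn h).map fun y => adjoint (crea y)).prod := by
    intro m h; rw [List.map_ofFn]; rfl
  set B := creaProd crea u * annProd crea v with hB
  set Gv := creaProd crea g Ω with hGv
  set Fv := creaProd crea f Ω with hFv
  set Cu := creaProd crea u with hCu
  set Av := annProd crea v with hAv
  have hsq : ∀ m : ℕ, ((-1:ℂ)^m) * ((-1:ℂ)^m) = 1 := by
    intro m; rw [← pow_add, ← two_mul, pow_mul]; norm_num
  have hGx : ∀ x, creaProd crea g (crea (wg x) Ω) = ((-1:ℂ)^n) • crea (wg x) Gv := by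
    intro x
    have h0 := congrArg (fun X : F →L[ℂ] F => X Ω)
      (aux_anticomm crea hcar₁ (List.ofFn g) (wg x))
    simp only [List.length_ofFn, mul_apply, smul_apply] at h0
    rw [hGv, list_eq n g]
    exact h0
  have hFx : ∀ x, creaProd crea f (crea (wf x) Ω) = ((-1:ℂ)^n) • crea (wf x) Fv := by
    intro x
    have h0 := congrArg (fun X : F →L[ℂ] F => X Ω)
      (aux_anticomm crea hcar₁ (List.ofFn f) (wf x))
    simp only [List.length_ofFn, mul_apply, smul_apply] at h0
    rw [hFv, list_eq n f]
    exact h0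
  set e : α → F := fun x => Av (crea (wf x) Fv) - ((-1:ℂ)^k) • crea (wf x) (Av Fv) with he
  have hel : Tendsto e l (nhds 0) := by
    have := aux_comm_ann crea hcar₂ wf hwf (List.ofFn v) Fv
    rw [← alist_eq k v] at this
    simpa [List.length_ofFn] using this
  set E : α → F := fun x => ((-1:ℂ)^n) • Cu (e x) with hE
  have hEl : Tendsto E l (nhds 0) := by
    have h1 := (Cu.continuous.tendsto 0).comp hel
    rw [map_zero] at h1
    simpa using h1.const_smul ((-1:ℂ)^n)
  have hBFx : ∀ x, B (creaProd crea f (crea (wf x) Ω))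
      = ((-1:ℂ)^n) • crea (wf x) (B Fv) + E x := by
    intro x
    have hAveq : Av (crea (wf x) Fv) = ((-1:ℂ)^k) • crea (wf x) (Av Fv) + e x := by
      rw [he]; module
    have hCucomm : ∀ z, Cu (crea (wf x) z) = ((-1:ℂ)^k) • crea (wf x) (Cu z) := by
      intro z
      have h0 := congrArg (fun X : F →L[ℂ] F => X z)
        (aux_anticomm crea hcar₁ (List.ofFn u) (wf x))
      simp only [List.length_ofFn, mul_apply, smul_apply] at h0
      rw [hCu, list_eq k u]
      exact h0
    have hBmul : ∀ z, B z = Cu (Av z) := fun z => rfl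
    rw [hBmul, hFx x, map_smul, hAveq, map_smul, map_add, map_smul, hCucomm, smul_smul,
      hsq k, one_smul, smul_add, hBmul]
  have key2 : ∀ x, adjoint (crea (wg x)) (crea (wf x) (B Fv))
      = c • (B Fv) - crea (wf x) (adjoint (crea (wg x)) (B Fv)) := by
    intro x
    have h0 := congrArg (fun X : F →L[ℂ] F => X (B Fv)) (hcar₂ (wg x) (wf x))
    simp only [add_apply, mul_apply, smul_apply, one_apply] at h0
    rw [hc x] at h0
    exact eq_sub_of_add_eq h0
  set r1 : α → ℂ := fun x =>
    inner ℂ (adjoint (crea (wf x)) Gv) (adjoint (crea (wg x)) (B Fv)) with hr1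
  have hr1l : Tendsto r1 l (nhds 0) := by
    have hv : Tendsto (fun x => adjoint (crea (wf x)) Gv) l (nhds 0) := by
      have := aux_ann_vanish crea hcar₂ Ω hvac wf hwf (List.ofFn g)
      rw [← list_eq n g, ← hGv] at this
      exact this
    apply squeeze_zero_norm
      (a := fun x => ‖adjoint (crea (wf x)) Gv‖ * (Cg * ‖B Fv‖))
    · intro x
      refine (norm_inner_le_norm _ _).trans ?_
      refine mul_le_mul_of_nonneg_left ?_ (norm_nonneg _)
      exact ((aux_apply_le crea hcar₂ (wg x) (B Fv)).2).trans
        (mul_le_mul_of_nonneg_right (hCg x) (norm_nonneg _))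
    · simpa using hv.norm.mul_const (Cg * ‖B Fv‖)
  set r2 : α → ℂ := fun x => inner ℂ (crea (wg x) Gv) (E x) with hr2
  have hr2l : Tendsto r2 l (nhds 0) := by
    apply squeeze_zero_norm (a := fun x => (Cg * ‖Gv‖) * ‖E x‖)
    · intro x
      refine (norm_inner_le_norm _ _).trans ?_
      refine mul_le_mul_of_nonneg_right ?_ (norm_nonneg _)
      exact ((aux_apply_le crea hcar₂ (wg x) Gv).1).trans
        (mul_le_mul_of_nonneg_right (hCg x) (norm_nonneg _))
    · simpa using hEl.norm.const_mul (Cg * ‖Gv‖)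
  have hconj : (starRingEnd ℂ) ((-1:ℂ)^n) = (-1:ℂ)^n := by simp
  have hptw : ∀ x,
      (inner ℂ (creaProd crea g (crea (wg x) Ω)) (B (creaProd crea f (crea (wf x) Ω))) : ℂ)
        - (inner ℂ Gv (B Fv) : ℂ) * c = ((-1:ℂ)^n) * r2 x - r1 x := by
    intro x
    rw [hGx x, hBFx x, inner_smul_left, inner_add_right, inner_smul_right, hconj,
      ← adjoint_inner_right (crea (wg x)) Gv (crea (wf x) (B Fv)), key2 x,
      inner_sub_right, inner_smul_right,
      ← adjoint_inner_left (crea (wf x)) (adjoint (crea (wg x)) (B Fv)) Gv]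
    rw [hr1, hr2]
    linear_combination (c * (inner ℂ Gv (B Fv) : ℂ)
        - inner ℂ (adjoint (crea (wf x)) Gv) (adjoint (crea (wg x)) (B Fv))) * hsq n
  have hcomb := (hr2l.const_mul ((-1:ℂ)^n)).sub hr1l
  rw [mul_zero, sub_zero] at hcomb
  have h2 := hcomb.congr fun x => (hptw x).symm
  exact tendsto_sub_nhds_zero_iff.mp h2


lemma aux_main (crea : H → F →L[ℂ] F) (Ω : F)
    (hcar₁ : ∀ f g : H, crea f * crea g + crea g * crea f = 0)
    (hcar₂ : ∀ f g : H,
      adjoint (crea f) * crea g + crea g * adjoint (crea f)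
        = (inner ℂ f g : ℂ) • (1 : F →L[ℂ] F))
    (hvac : ∀ f : H, adjoint (crea f) Ω = 0)
    {α : Type*} {l : Filter α} (wf wg : α → H)
    (hwf : ∀ u : H, Tendsto (fun x => (inner ℂ u (wf x) : ℂ)) l (nhds 0))
    (hwg : ∀ u : H, Tendsto (fun x => (inner ℂ u (wg x) : ℂ)) l (nhds 0))
    (c : ℂ) (hc : ∀ x, (inner ℂ (wg x) (wf x) : ℂ) = c)
    (Cf Cg : ℝ) (hCf : ∀ x, ‖wf x‖ ≤ Cf) (hCg : ∀ x, ‖wg x‖ ≤ Cg)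
    (hCf0 : 0 ≤ Cf) (hCg0 : 0 ≤ Cg)
    (A : F →L[ℂ] F) (hA : A ∈ ppCAR crea)
    (n : ℕ) (f g : Fin n → H) :
    Tendsto (fun x => (inner ℂ (creaProd crea g (crea (wg x) Ω))
        (A (creaProd crea f (crea (wf x) Ω))) : ℂ)) l
      (nhds ((inner ℂ (creaProd crea g Ω) (A (creaProd crea f Ω)) : ℂ) * c)) := by
  set Gx : α → F := fun x => creaProd crea g (crea (wg x) Ω) with hGxdef
  set Fx : α → F := fun x => creaProd crea f (crea (wf x) Ω) with hFxdef
  set Gv : F := creaProd crea g Ω with hGvdef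
  set Fv : F := creaProd crea f Ω with hFvdef
  set DG : ℝ := ‖creaProd crea g‖ * (Cg * ‖Ω‖) with hDG
  set DF : ℝ := ‖creaProd crea f‖ * (Cf * ‖Ω‖) with hDF
  have hDG0 : 0 ≤ DG := by positivity
  have hDF0 : 0 ≤ DF := by positivity
  have hGxb : ∀ x, ‖Gx x‖ ≤ DG := by
    intro x
    refine ((creaProd crea g).le_opNorm _).trans ?_
    refine mul_le_mul_of_nonneg_left ?_ (norm_nonneg _)
    exact ((aux_apply_le crea hcar₂ (wg x) Ω).1).trans
      (mul_le_mul_of_nonneg_right (hCg x) (norm_nonneg _))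
  have hFxb : ∀ x, ‖Fx x‖ ≤ DF := by
    intro x
    refine ((creaProd crea f).le_opNorm _).trans ?_
    refine mul_le_mul_of_nonneg_left ?_ (norm_nonneg _)
    exact ((aux_apply_le crea hcar₂ (wf x) Ω).1).trans
      (mul_le_mul_of_nonneg_right (hCf x) (norm_nonneg _))
  have hspan : ∀ B ∈ Submodule.span ℂ
      {X : F →L[ℂ] F | ∃ (k : ℕ) (u v : Fin k → H), X = creaProd crea u * annProd crea v},
      Tendsto (fun x => (inner ℂ (Gx x) (B (Fx x)) : ℂ)) l
        (nhds ((inner ℂ Gv (B Fv) : ℂ) * c)) := by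
    intro B hB
    induction hB using Submodule.span_induction with
    | mem X hX =>
      obtain ⟨k, u, v, rfl⟩ := hX
      exact aux_mono crea Ω hcar₁ hcar₂ hvac wf wg hwf hwg c hc Cg hCg n f g k u v
    | zero => simpa using (tendsto_const_nhds : Tendsto (fun _ : α => (0:ℂ)) l (nhds 0))
    | add B₁ B₂ h₁ h₂ ih₁ ih₂ =>
      have hval : (inner ℂ Gv ((B₁ + B₂) Fv) : ℂ) * c
          = (inner ℂ Gv (B₁ Fv) : ℂ) * c + (inner ℂ Gv (B₂ Fv) : ℂ) * c := by
        simp [inner_add_right, add_mul]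
      rw [hval]
      exact (ih₁.add ih₂).congr fun x => by simp [inner_add_right]
    | smul a B hBm ih =>
      have hval : (inner ℂ Gv ((a • B) Fv) : ℂ) * c = a * ((inner ℂ Gv (B Fv) : ℂ) * c) := by
        simp [inner_smul_right, mul_assoc]
      rw [hval]
      exact (ih.const_mul a).congr fun x => by simp [inner_smul_right]
  -- closure argument
  set K : ℝ := DG * DF + ‖Gv‖ * ‖Fv‖ * ‖c‖ with hK
  have hK0 : 0 ≤ K := by positivity
  rw [Metric.tendsto_nhds]
  intro ε hε
  have hδpos : 0 < ε / (2 * (K + 1)) := by positivity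
  obtain ⟨B, hBmem, hABd⟩ := Metric.mem_closure_iff.mp hA _ hδpos
  rw [dist_eq_norm] at hABd
  have h2 := Metric.tendsto_nhds.mp (hspan B hBmem) (ε/2) (by positivity)
  filter_upwards [h2] with x hx
  have hd1 : dist (inner ℂ (Gx x) (A (Fx x)) : ℂ) (inner ℂ (Gx x) (B (Fx x)) : ℂ)
      ≤ DG * (‖A - B‖ * DF) := by
    rw [dist_eq_norm]
    have heq : (inner ℂ (Gx x) (A (Fx x)) : ℂ) - (inner ℂ (Gx x) (B (Fx x)) : ℂ)
        = inner ℂ (Gx x) ((A - B) (Fx x)) := by simp [inner_sub_right]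
    rw [heq]
    refine (norm_inner_le_norm _ _).trans ?_
    refine mul_le_mul (hGxb x) ?_ (norm_nonneg _) hDG0
    refine ((A - B).le_opNorm _).trans ?_
    exact mul_le_mul_of_nonneg_left (hFxb x) (norm_nonneg _)
  have hd3 : dist ((inner ℂ Gv (B Fv) : ℂ) * c) ((inner ℂ Gv (A Fv) : ℂ) * c)
      ≤ ‖Gv‖ * ‖Fv‖ * ‖c‖ * ‖A - B‖ := by
    rw [dist_eq_norm]
    have heq : (inner ℂ Gv (B Fv) : ℂ) * c - (inner ℂ Gv (A Fv) : ℂ) * c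
        = (inner ℂ Gv ((B - A) (Fv)) : ℂ) * c := by simp [inner_sub_right, sub_mul]
    rw [heq, norm_mul]
    have h4 : ‖(inner ℂ Gv ((B - A) Fv) : ℂ)‖ ≤ ‖Gv‖ * (‖A - B‖ * ‖Fv‖) := by
      refine (norm_inner_le_norm _ _).trans ?_
      refine mul_le_mul_of_nonneg_left ?_ (norm_nonneg _)
      refine ((B - A).le_opNorm _).trans ?_
      rw [norm_sub_rev]
    calc ‖(inner ℂ Gv ((B - A) Fv) : ℂ)‖ * ‖c‖
        ≤ (‖Gv‖ * (‖A - B‖ * ‖Fv‖)) * ‖c‖ :=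
          mul_le_mul_of_nonneg_right h4 (norm_nonneg _)
      _ = ‖Gv‖ * ‖Fv‖ * ‖c‖ * ‖A - B‖ := by ring
  have htri := dist_triangle4 (inner ℂ (Gx x) (A (Fx x)) : ℂ)
    (inner ℂ (Gx x) (B (Fx x)) : ℂ) ((inner ℂ Gv (B Fv) : ℂ) * c) ((inner ℂ Gv (A Fv) : ℂ) * c)
  have hKbd : DG * (‖A - B‖ * DF) + ‖Gv‖ * ‖Fv‖ * ‖c‖ * ‖A - B‖ ≤ ε / 2 := by
    have h5 : DG * (‖A - B‖ * DF) + ‖Gv‖ * ‖Fv‖ * ‖c‖ * ‖A - B‖ = K * ‖A - B‖ := by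
      rw [hK]; ring
    rw [h5]
    have h6 : K * ‖A - B‖ ≤ K * (ε / (2 * (K + 1))) :=
      mul_le_mul_of_nonneg_left hABd.le hK0
    refine h6.trans ?_
    have hδ : (ε / (2 * (K + 1))) * (2 * (K + 1)) = ε :=
      div_mul_cancel₀ _ (by positivity)
    nlinarith [hδ, hK0, hδpos]
  have := htri.trans_lt (by linarith [hd1, hd3, hx] : _ < ε)
  exact this

theorem clustering_ppCAR (d : ℕ)
    (crea : H → F →L[ℂ] F) (Ω : F)
    (hcar₁ : ∀ f g : H, crea f * crea g + crea g * crea f = 0)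
    (hcar₂ : ∀ f g : H,
      adjoint (crea f) * crea g + crea g * adjoint (crea f)
        = (inner ℂ f g : ℂ) • (1 : F →L[ℂ] F))
    (hvac : ∀ f : H, adjoint (crea f) Ω = 0)
    -- the translations T_x : unitary, tending weakly to zero as |x| → ∞
    (T : EuclideanSpace ℝ (Fin d) → H →L[ℂ] H)
    (hTiso : ∀ x u, ‖T x u‖ = ‖u‖)
    (hTweak : ∀ u v : H,
      Tendsto (fun x => (inner ℂ u (T x v) : ℂ))
        (Bornology.cobounded (EuclideanSpace ℝ (Fin d))) (nhds 0))
    (A : F →L[ℂ] F) (hA : A ∈ ppCAR crea)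
    (n : ℕ) (f g : Fin (n + 1) → H) :
    Tendsto
      (fun x : EuclideanSpace ℝ (Fin d) =>
        (inner ℂ
          (creaProd crea (fun i : Fin n => g i.castSucc) (crea (T x (g (Fin.last n))) Ω))
          (A (creaProd crea (fun i : Fin n => f i.castSucc) (crea (T x (f (Fin.last n))) Ω)))
          : ℂ))
      (Bornology.cobounded (EuclideanSpace ℝ (Fin d)))
      (nhds
        ((inner ℂ (creaProd crea (fun i : Fin n => g i.castSucc) Ω)
            (A (creaProd crea (fun i : Fin n => f i.castSucc) Ω)) : ℂ)
          * (inner ℂ (g (Fin.last n)) (f (Fin.last n)) : ℂ))) := by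
  refine aux_main crea Ω hcar₁ hcar₂ hvac
    (fun x => T x (f (Fin.last n))) (fun x => T x (g (Fin.last n)))
    (fun u => hTweak u (f (Fin.last n))) (fun u => hTweak u (g (Fin.last n)))
    (inner ℂ (g (Fin.last n)) (f (Fin.last n)) : ℂ)
    (fun x => (LinearIsometry.inner_map_map
      ⟨(T x).toLinearMap, hTiso x⟩ (g (Fin.last n)) (f (Fin.last n))))
    ‖f (Fin.last n)‖ ‖g (Fin.last n)‖
    (fun x => (hTiso x (f (Fin.last n))).le) (fun x => (hTiso x (g (Fin.last n))).le)
    (norm_nonneg _) (norm_nonneg _) A hA n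
    (fun i : Fin n => f i.castSucc) (fun i : Fin n => g i.castSucc)
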